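/- If α is an irreducible ladder multisegment, then n_{α̃} + n_α = S_α + c_α, where c_α = 1 and S_α is the cardinality of the union of all segments of α. -/

import Mathlib

/-- A segment `[b, e]` is the set of consecutive integers `{b, b+1, ..., e}`,
recorded as the pair `(b, e)` of its base `b` and end `e`. -/
abbrev Segment : Type := ℤ × ℤ

/-- A multisegment is a finite multiset of segments. -/
abbrev Multisegment : Type := Multiset Segment

/-- The length `e - b + 1` of the segment `[b, e]`. -/
def Segment.len (Δ : Segment) : ℤ := Δ.2 - Δ.1 + 1

/-- `[b₁,e₁]` precedes `[b₂,e₂]` iff `b₁ < b₂`, `e₁ < e₂` and `b₂ ≤ e₁ + 1`. -/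
def Precedes (Δ₁ Δ₂ : Segment) : Prop :=
  Δ₁.1 < Δ₂.1 ∧ Δ₁.2 < Δ₂.2 ∧ Δ₂.1 ≤ Δ₁.2 + 1

instance (Δ₁ Δ₂ : Segment) : Decidable (Precedes Δ₁ Δ₂) := by
  unfold Precedes; infer_instance

/-- Every member of a multisegment is a genuine (nonempty) segment. -/
def IsMultisegment (α : Multisegment) : Prop := ∀ Δ ∈ α, Δ.1 ≤ Δ.2

/-- The rank `r_{i,j}`: the number of segments `[k,l]` of `α` with `k ≤ i` and `j ≤ l`. -/
def rank (α : Multisegment) (i j : ℤ) : ℕ :=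
  (α.filter fun Δ => Δ.1 ≤ i ∧ j ≤ Δ.2).card

/-- `n_α`: the number of segments of `α`, counted with multiplicity. -/
def nSeg (α : Multisegment) : ℕ := Multiset.card α

instance : Std.Commutative (fun a b : ℤ => max a b) := ⟨max_comm⟩
instance : Std.Associative (fun a b : ℤ => max a b) := ⟨max_assoc⟩

/-- `L_α`: the length of the longest segment of `α` (0 for the empty multisegment). -/
def Lmax (α : Multisegment) : ℤ := (α.map Segment.len).fold (fun a b => max a b) 0

/-- The support `∪_{Δ ∈ α} Δ` of a multisegment, as a finite set of integers. -/
noncomputable def supp (α : Multisegment) : Finset ℤ := α.toFinset.biUnion fun Δ => Finset.Icc Δ.1 Δ.2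

/-- `S_α`: the number of integers in `∪_{Δ ∈ α} Δ`. -/
noncomputable def Ssize (α : Multisegment) : ℕ := (supp α).card

/-- `c_α`: the number of interval components of `∪_{Δ ∈ α} Δ`
(counted via their left endpoints). -/
noncomputable def comp (α : Multisegment) : ℕ :=
  ((supp α).filter fun x => x - 1 ∉ supp α).card

/-! ### The Mœglin–Waldspurger algorithm -/

/-- Remove the end value from a segment, dropping it if it becomes empty. -/
def removeEnd (Δ : Segment) : Option Segment :=
  if Δ.1 ≤ Δ.2 - 1 then some (Δ.1, Δ.2 - 1) else none

/-- Among the segments of `l` with end value `m`, pick a shortest one (if any). -/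
def pickShortest (m : ℤ) (l : List Segment) : Option Segment :=
  (l.filter fun Δ => Δ.2 == m).foldl (fun acc Δ =>
    match acc with
    | none => some Δ
    | some Δ' => if Δ'.1 < Δ.1 then some Δ else some Δ') none

/-- Starting from a current segment `Δ`, greedily build the Mœglin–Waldspurger chain:
at each step choose a shortest segment preceding the current one whose end value is one
less.  Returns the chosen chain together with the unchosen segments. -/
def pickChain : ℕ → Segment → List Segment → List Segment × List Segment
  | 0, Δ, rest => ([Δ], rest)
  | n + 1, Δ, rest =>
    match pickShortest (Δ.2 - 1) (rest.filter fun Δ' => decide (Precedes Δ' Δ)) with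
    | none => ([Δ], rest)
    | some Δ' =>
      let p := pickChain n Δ' (rest.erase Δ')
      (Δ :: p.1, p.2)

/-- One iteration of the Mœglin–Waldspurger algorithm: returns the produced dual
segment `[m, e]` together with the multisegment `α'` left after removing the chosen
end values. -/
def mwIter (l : List Segment) : Option (Segment × List Segment) :=
  match (l.map fun Δ => Δ.2).max? with
  | none => none
  | some e =>
    match pickShortest e l with
    | none => none
    | some Δe =>
      let p := pickChain l.length Δe (l.erase Δe)
      some ((Δe.2 - ((p.1.length : ℤ) - 1), e), p.2 ++ p.1.filterMap removeEnd)

/-- The total number of integers (with multiplicity) in a list of segments. -/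
def totalSize (l : List Segment) : ℕ := (l.map fun Δ => (Δ.2 - Δ.1 + 1).toNat).sum

/-- Fueled iteration of the Mœglin–Waldspurger algorithm. -/
def mwAux : ℕ → List Segment → List Segment
  | 0, _ => []
  | n + 1, l =>
    match mwIter l with
    | none => []
    | some (Δ', l') => Δ' :: mwAux n l'

/-- The Mœglin–Waldspurger dual `α̃` of a multisegment `α`. -/
noncomputable def dual (α : Multisegment) : Multisegment :=
  (mwAux (totalSize α.toList) α.toList : List Segment)

/-! ### The partial order on multisegments -/

/-- An elementary move on multisegments: either the union–intersection move
(replace distinct overlapping `Δ₁, Δ₂` by `Δ₁ ∩ Δ₂` and `Δ₁ ∪ Δ₂`) or the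
conjunction move (replace two disjoint adjacent segments by their union). -/
inductive MoveStep : Multisegment → Multisegment → Prop
  | unionInter (α : Multisegment) (Δ₁ Δ₂ : Segment)
      (hmeet : max Δ₁.1 Δ₂.1 ≤ min Δ₁.2 Δ₂.2) (hne : Δ₁ ≠ Δ₂) :
      MoveStep (Δ₁ ::ₘ Δ₂ ::ₘ α)
        ((max Δ₁.1 Δ₂.1, min Δ₁.2 Δ₂.2) ::ₘ (min Δ₁.1 Δ₂.1, max Δ₁.2 Δ₂.2) ::ₘ α)
  | conj (α : Multisegment) (Δ₁ Δ₂ : Segment) (h : Δ₂.1 = Δ₁.2 + 1) :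
      MoveStep (Δ₁ ::ₘ Δ₂ ::ₘ α) ((Δ₁.1, Δ₂.2) ::ₘ α)

/-- The partial order `α ≤ β` on multisegments, generated by the elementary moves. -/
def mle (α β : Multisegment) : Prop := Relation.ReflTransGen MoveStep α β

/-- A ladder multisegment: the segments can be listed with strictly increasing
bases and strictly increasing ends. -/
def IsLadder (α : Multisegment) : Prop :=
  ∃ l : List Segment, (l : Multiset Segment) = α ∧
    l.Chain' fun Δ₁ Δ₂ => Δ₁.1 < Δ₂.1 ∧ Δ₁.2 < Δ₂.2

/-- `C_α`: the maximal number of (nonempty) components in a decomposition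
`α = ⊔ᵢ αᵢ` satisfying `α̃ = ⊔ᵢ α̃ᵢ`. -/
noncomputable def Cmax (α : Multisegment) : ℕ :=
  sSup {n | ∃ parts : Multiset Multisegment, Multiset.card parts = n ∧
    (∀ γ ∈ parts, γ ≠ 0) ∧ parts.sum = α ∧ (parts.map dual).sum = dual α}

/-- The simple multisegment `{[b,e], [b+1,e+1], ..., [b+n-1,e+n-1]}`. -/
def simpleMS (b e : ℤ) (n : ℕ) : Multisegment :=
  (Multiset.range n).map fun i => (b + i, e + i)

/-- The symmetric simple multisegment `{[-e,b], [-e+1,b+1], ..., [-b,e]}`. -/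
def symmSimple (b e : ℤ) : Multisegment :=
  (Multiset.range (e - b + 1).toNat).map fun i => (-e + i, b + i)

open scoped Classical

/-- The invariant: a nodup multiset of nonempty segments, totally ordered
componentwise. -/
def Good (α : Multisegment) : Prop :=
  α.Nodup ∧ (∀ Δ ∈ α, Δ.1 ≤ Δ.2) ∧
    ∀ Δ₁ ∈ α, ∀ Δ₂ ∈ α, Δ₁ ≠ Δ₂ →
      (Δ₁.1 < Δ₂.1 ∧ Δ₁.2 < Δ₂.2) ∨ (Δ₂.1 < Δ₁.1 ∧ Δ₂.2 < Δ₁.2)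

lemma Good.mono {α β : Multisegment} (h : β ≤ α) (hα : Good α) : Good β :=
  ⟨Multiset.nodup_of_le h hα.1, fun Δ hΔ => hα.2.1 Δ (Multiset.mem_of_le h hΔ),
   fun Δ₁ h₁ Δ₂ h₂ hne => hα.2.2 Δ₁ (Multiset.mem_of_le h h₁) Δ₂ (Multiset.mem_of_le h h₂) hne⟩

lemma Good.end_inj {α : Multisegment} (hα : Good α) {Δ₁ Δ₂ : Segment}
    (h₁ : Δ₁ ∈ α) (h₂ : Δ₂ ∈ α) (h : Δ₁.2 = Δ₂.2) : Δ₁ = Δ₂ := by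
  by_contra hne
  rcases hα.2.2 Δ₁ h₁ Δ₂ h₂ hne with ⟨_, h'⟩ | ⟨_, h'⟩ <;> omega

lemma mem_supp {α : Multisegment} {x : ℤ} :
    x ∈ supp α ↔ ∃ Δ ∈ α, Δ.1 ≤ x ∧ x ≤ Δ.2 := by
  simp [supp, Finset.mem_biUnion, Multiset.mem_toFinset, Finset.mem_Icc]

lemma end_mem_supp {α : Multisegment} {Δ : Segment} (h : Δ ∈ α) (h2 : Δ.1 ≤ Δ.2) :
    Δ.2 ∈ supp α := mem_supp.2 ⟨Δ, h, h2, le_refl _⟩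

lemma runLen_ex (α : Multisegment) (x : ℤ) : ∃ j : ℕ, ¬ ∃ Δ ∈ α, Δ.2 = x - (j : ℤ) := by
  classical
  set E := α.toFinset.image Prod.snd with hE
  rcases E.eq_empty_or_nonempty with h | h
  · refine ⟨0, ?_⟩
    rintro ⟨Δ, hΔ, _⟩
    have : Δ.2 ∈ E := Finset.mem_image.2 ⟨Δ, Multiset.mem_toFinset.2 hΔ, rfl⟩
    simp [h] at this
  · refine ⟨(x - E.min' h + 1).toNat, ?_⟩
    rintro ⟨Δ, hΔ, he⟩
    have hmem : Δ.2 ∈ E := Finset.mem_image.2 ⟨Δ, Multiset.mem_toFinset.2 hΔ, rfl⟩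
    have := E.min'_le _ hmem
    omega

/-- Number of consecutive values `x, x-1, x-2, ...` that occur as ends of `α`. -/
noncomputable def runLen (α : Multisegment) (x : ℤ) : ℕ := Nat.find (runLen_ex α x)

lemma runLen_eq_zero {α : Multisegment} {x : ℤ} :
    runLen α x = 0 ↔ ¬ ∃ Δ ∈ α, Δ.2 = x := by
  classical
  rw [runLen, Nat.find_eq_zero]
  norm_num

lemma runLen_succ {α : Multisegment} {x : ℤ} (h : ∃ Δ ∈ α, Δ.2 = x) :
    runLen α x = runLen α (x - 1) + 1 := by
  classical
  rw [runLen, Nat.find_eq_iff]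
  constructor
  · rintro ⟨Δ, hΔ, he⟩
    have h2 : ¬∃ Δ ∈ α, Δ.2 = (x - 1) - (runLen α (x - 1) : ℤ) :=
      Nat.find_spec (runLen_ex α (x - 1))
    exact h2 ⟨Δ, hΔ, by omega⟩
  · intro m hm
    match m, hm with
    | 0, _ => simpa using h
    | k + 1, hm =>
      have hk : k < runLen α (x - 1) := by omega
      have h2 := Nat.find_min (runLen_ex α (x - 1)) hk
      simp only [not_not] at h2 ⊢
      obtain ⟨Δ, hΔ, he⟩ := h2
      exact ⟨Δ, hΔ, by omega⟩

lemma runLen_congr {α β : Multisegment} {x : ℤ}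
    (h : ∀ y : ℤ, y ≤ x → ((∃ Δ ∈ α, Δ.2 = y) ↔ (∃ Δ ∈ β, Δ.2 = y))) :
    runLen α x = runLen β x := by
  classical
  apply le_antisymm
  · exact Nat.find_mono fun j hj hc => hj ((h (x - j) (by omega)).1 hc)
  · exact Nat.find_mono fun j hj hc => hj ((h (x - j) (by omega)).2 hc)

lemma runLen_le_card (α : Multisegment) (x : ℤ) : runLen α x ≤ Multiset.card α := by
  classical
  suffices H : ∀ (n : ℕ) (α : Multisegment) (x : ℤ), Multiset.card α = n →
      runLen α x ≤ n from H _ α x rfl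
  intro n
  induction n with
  | zero =>
    intro α x hn
    have : α = 0 := Multiset.card_eq_zero.1 hn
    subst this
    simp [Nat.le_zero, runLen_eq_zero]
  | succ n ih =>
    intro α x hn
    by_cases h : ∃ Δ ∈ α, Δ.2 = x
    · obtain ⟨Δ, hΔ, he⟩ := h
      rw [runLen_succ ⟨Δ, hΔ, he⟩]
      have hcard : Multiset.card (α.erase Δ) = n := by
        rw [Multiset.card_erase_of_mem hΔ, hn]; rfl
      have heq : runLen α (x - 1) = runLen (α.erase Δ) (x - 1) := by
        apply runLen_congr
        intro y hy
        constructor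
        · rintro ⟨Δ', hΔ', he'⟩
          refine ⟨Δ', ?_, he'⟩
          rcases eq_or_ne Δ' Δ with rfl | hne
          · omega
          · exact (Multiset.mem_erase_of_ne hne).2 hΔ'
        · rintro ⟨Δ', hΔ', he'⟩
          exact ⟨Δ', Multiset.mem_of_le (Multiset.erase_le _ _) hΔ', he'⟩
      rw [heq]
      exact Nat.succ_le_succ (ih _ _ hcard)
    · rw [runLen_eq_zero.2 h]; omega
section PickShortest

private def psStep : Option Segment → Segment → Option Segment := fun acc Δ =>
  match acc with
  | none => some Δ
  | some Δ' => if Δ'.1 < Δ.1 then some Δ else some Δ'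

lemma pickShortest_eq_foldl (m : ℤ) (l : List Segment) :
    pickShortest m l = (l.filter fun Δ => Δ.2 == m).foldl psStep none := rfl

lemma foldl_psStep_const (Δ₀ : Segment) :
    ∀ L : List Segment, (∀ x ∈ L, x = Δ₀) → L.foldl psStep (some Δ₀) = some Δ₀ := by
  intro L
  induction L with
  | nil => intro _; rfl
  | cons a L ih =>
    intro h
    have ha : a = Δ₀ := h a (by simp)
    subst ha
    have : psStep (some a) a = some a := by
      simp [psStep]
    rw [List.foldl_cons, this]
    exact ih fun x hx => h x (by simp [hx])

lemma pickShortest_none {m : ℤ} {l : List Segment} (h : ∀ Δ ∈ l, Δ.2 ≠ m) :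
    pickShortest m l = none := by
  have : l.filter (fun Δ => Δ.2 == m) = [] := by
    rw [List.filter_eq_nil_iff]
    intro a ha
    simpa using h a ha
  rw [pickShortest_eq_foldl, this]
  rfl

lemma pickShortest_unique {m : ℤ} {l : List Segment} {Δ₀ : Segment}
    (h₀ : Δ₀ ∈ l) (he : Δ₀.2 = m) (huniq : ∀ Δ ∈ l, Δ.2 = m → Δ = Δ₀) :
    pickShortest m l = some Δ₀ := by
  rw [pickShortest_eq_foldl]
  have hmem : Δ₀ ∈ l.filter (fun Δ => Δ.2 == m) := by
    simp [List.mem_filter, h₀, he]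
  have hall : ∀ x ∈ l.filter (fun Δ => Δ.2 == m), x = Δ₀ := by
    intro x hx
    rw [List.mem_filter] at hx
    exact huniq x hx.1 (by simpa using hx.2)
  cases hfl : l.filter (fun Δ => Δ.2 == m) with
  | nil => rw [hfl] at hmem; simp at hmem
  | cons a L =>
    have ha : a = Δ₀ := hall a (by rw [hfl]; simp)
    have hL : ∀ x ∈ L, x = Δ₀ := fun x hx => hall x (by rw [hfl]; simp [hx])
    subst ha
    rw [List.foldl_cons]
    show L.foldl psStep (some a) = some a
    exact foldl_psStep_const a L hL

end PickShortest
open scoped Classical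

lemma coe_erase' (l : List Segment) (a : Segment) :
    ((l.erase a : List Segment) : Multisegment) = (l : Multisegment).erase a := by
  induction l with
  | nil => rfl
  | cons b l ih =>
    by_cases h : b = a
    · subst h
      rw [List.erase_cons_head, ← Multiset.cons_coe, Multiset.erase_cons_head]
    · rw [List.erase_cons_tail (by simpa using h), ← Multiset.cons_coe,
        ← Multiset.cons_coe, Multiset.erase_cons_tail _ h, ih]

lemma runLen_pos {α : Multisegment} {Δ : Segment} (h : Δ ∈ α) :
    1 ≤ runLen α Δ.2 := by
  rcases Nat.eq_zero_or_pos (runLen α Δ.2) with h0 | h1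
  · exact absurd ⟨Δ, h, rfl⟩ (runLen_eq_zero.1 h0)
  · exact h1

lemma pickChain_spec : ∀ (fuel : ℕ) (Δ : Segment) (rest : List Segment),
    Good (Δ ::ₘ (rest : Multisegment)) →
    (∀ Δ' ∈ rest, Δ'.2 < Δ.2) →
    runLen (Δ ::ₘ (rest : Multisegment)) Δ.2 ≤ fuel + 1 →
    ((pickChain fuel Δ rest).1 : Multisegment)
        = (Δ ::ₘ (rest : Multisegment)).filter
            (fun Δ' => Δ.2 - (runLen (Δ ::ₘ (rest : Multisegment)) Δ.2 : ℤ) < Δ'.2)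
    ∧ ((pickChain fuel Δ rest).2 : Multisegment)
        = (rest : Multisegment).filter
            (fun Δ' => Δ'.2 ≤ Δ.2 - (runLen (Δ ::ₘ (rest : Multisegment)) Δ.2 : ℤ))
    ∧ (pickChain fuel Δ rest).1.length = runLen (Δ ::ₘ (rest : Multisegment)) Δ.2 := by
  intro fuel
  induction fuel with
  | zero =>
    intro Δ rest hg hmax hfuel
    set α₀ : Multisegment := Δ ::ₘ (rest : Multisegment) with hα₀
    have ht1 : runLen α₀ Δ.2 = 1 :=
      le_antisymm hfuel (runLen_pos (Multiset.mem_cons_self _ _))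
    rw [ht1]
    refine ⟨?_, ?_, rfl⟩
    · show (([Δ] : List Segment) : Multisegment) = _
      rw [Multiset.filter_cons]
      simp only [Nat.cast_one]
      rw [if_pos (by omega : Δ.2 - (1 : ℤ) < Δ.2)]
      have h2 : (rest : Multisegment).filter (fun Δ' => Δ.2 - ((1:ℕ):ℤ) < Δ'.2) = 0 := by
        rw [Multiset.filter_eq_nil]
        intro a ha
        have := hmax a (by exact_mod_cast ha)
        push_cast
        omega
      simp only [Nat.cast_one] at h2
      rw [h2, add_zero]
      rfl
    · show ((rest : List Segment) : Multisegment) = _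
      rw [eq_comm, Multiset.filter_eq_self]
      intro a ha
      have := hmax a (by exact_mod_cast ha)
      push_cast
      omega
  | succ n ih =>
    intro Δ rest hg hmax hfuel
    set α₀ : Multisegment := Δ ::ₘ (rest : Multisegment) with hα₀
    have hΔα : Δ ∈ α₀ := Multiset.mem_cons_self _ _
    have hne : Δ.1 ≤ Δ.2 := hg.2.1 Δ hΔα
    have htsucc : runLen α₀ Δ.2 = runLen α₀ (Δ.2 - 1) + 1 := runLen_succ ⟨Δ, hΔα, rfl⟩
    by_cases hB : ∃ Δ' ∈ rest, Δ'.2 = Δ.2 - 1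
    · -- case B : chain continues
      obtain ⟨Δ', hΔ'r, hΔ'e⟩ := hB
      have hΔ'α : Δ' ∈ α₀ := by
        rw [hα₀]; exact Multiset.mem_cons_of_mem (by exact_mod_cast hΔ'r)
      have hΔ'ne : Δ' ≠ Δ := by
        intro h; rw [h] at hΔ'e; omega
      have hprec : Precedes Δ' Δ := by
        rcases hg.2.2 Δ' hΔ'α Δ hΔα hΔ'ne with ⟨h1, h2⟩ | ⟨h1, h2⟩
        · exact ⟨h1, h2, by omega⟩
        · omega
      have hps : pickShortest (Δ.2 - 1)
          (rest.filter fun Δ'' => decide (Precedes Δ'' Δ)) = some Δ' := by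
        apply pickShortest_unique
        · rw [List.mem_filter]; exact ⟨hΔ'r, by simpa using hprec⟩
        · exact hΔ'e
        · intro Δ'' h'' he''
          rw [List.mem_filter] at h''
          exact hg.end_inj (Multiset.mem_cons_of_mem (by exact_mod_cast h''.1)) hΔ'α
            (by rw [he'', hΔ'e])
      have hrest_nodup : (rest : Multisegment).Nodup :=
        Multiset.nodup_of_le (Multiset.le_cons_self _ _) hg.1
      -- the new multiset equals ↑rest
      have hcons : Δ' ::ₘ ((rest.erase Δ' : List Segment) : Multisegment)
          = (rest : Multisegment) := by
        have h1 : Δ' ∈ (rest : Multisegment) := by exact_mod_cast hΔ'r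
        rw [coe_erase']
        exact Multiset.cons_erase h1
      have hβg : Good (Δ' ::ₘ ((rest.erase Δ' : List Segment) : Multisegment)) := by
        rw [hcons]
        exact hg.mono (Multiset.le_cons_self _ _)
      have hβmax : ∀ Δ'' ∈ rest.erase Δ', Δ''.2 < Δ'.2 := by
        intro Δ'' h''
        have h''r : Δ'' ∈ rest := List.mem_of_mem_erase h''
        have hlt : Δ''.2 < Δ.2 := hmax Δ'' h''r
        rcases eq_or_ne Δ''.2 (Δ.2 - 1) with heq | hneq
        · exfalso
          have : Δ'' = Δ' := hg.end_inj
            (Multiset.mem_cons_of_mem (by exact_mod_cast h''r)) hΔ'α (by rw [heq, hΔ'e])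
          rw [this] at h''
          have hnm : Δ' ∉ ((rest.erase Δ' : List Segment) : Multisegment) := by
            rw [coe_erase']
            exact hrest_nodup.notMem_erase
          exact hnm (Multiset.mem_coe.2 h'')
        · omega
      -- runLen of the new configuration
      have hrl : runLen (Δ' ::ₘ ((rest.erase Δ' : List Segment) : Multisegment)) Δ'.2
          = runLen α₀ Δ.2 - 1 := by
        rw [hcons, htsucc, hΔ'e]
        simp only [Nat.add_sub_cancel]
        apply runLen_congr
        intro y hy
        constructor
        · rintro ⟨Δ'', h'', he''⟩
          exact ⟨Δ'', Multiset.mem_cons_of_mem h'', he''⟩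
        · rintro ⟨Δ'', h'', he''⟩
          rcases Multiset.mem_cons.1 h'' with rfl | hmem
          · omega
          · exact ⟨Δ'', hmem, he''⟩
      have ht2 : 2 ≤ runLen α₀ Δ.2 := by
        have : 1 ≤ runLen α₀ (Δ.2 - 1) := by
          rcases Nat.eq_zero_or_pos (runLen α₀ (Δ.2 - 1)) with h0 | h1
          · exact absurd ⟨Δ', hΔ'α, hΔ'e⟩ (runLen_eq_zero.1 h0)
          · exact h1
        omega
      have hfuel' : runLen (Δ' ::ₘ ((rest.erase Δ' : List Segment) : Multisegment)) Δ'.2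
          ≤ n + 1 := by
        rw [hrl]; omega
      obtain ⟨ih1, ih2, ih3⟩ := ih Δ' (rest.erase Δ') hβg hβmax hfuel'
      -- unfold pickChain
      have hpc : pickChain (n + 1) Δ rest
          = (Δ :: (pickChain n Δ' (rest.erase Δ')).1, (pickChain n Δ' (rest.erase Δ')).2) := by
        rw [pickChain, hps]
      rw [hpc]
      have hthr : Δ'.2 - (runLen (Δ' ::ₘ ((rest.erase Δ' : List Segment) : Multisegment)) Δ'.2 : ℤ)
          = Δ.2 - (runLen α₀ Δ.2 : ℤ) := by
        rw [hrl, hΔ'e]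
        have := ht2
        push_cast
        omega
      refine ⟨?_, ?_, ?_⟩
      · show Δ ::ₘ ((pickChain n Δ' (rest.erase Δ')).1 : Multisegment) = _
        rw [ih1, hthr, hcons]
        have hrp := runLen_pos hΔα
        rw [hα₀, Multiset.filter_cons,
          if_pos (by omega : Δ.2 - ((runLen α₀ Δ.2 : ℕ) : ℤ) < Δ.2), ← hα₀,
          Multiset.singleton_add]
      · rw [ih2, hthr]
        conv_rhs => rw [← hcons]
        rw [Multiset.filter_cons,
          if_neg (by omega : ¬(Δ'.2 ≤ Δ.2 - ((runLen α₀ Δ.2 : ℕ) : ℤ))), zero_add]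
      · show (pickChain n Δ' (rest.erase Δ')).1.length + 1 = _
        rw [ih3, hrl]
        omega
    · -- case A : chain stops
      push_neg at hB
      have ht0 : runLen α₀ (Δ.2 - 1) = 0 := by
        rw [runLen_eq_zero]
        rintro ⟨Δ'', h'', he''⟩
        rcases Multiset.mem_cons.1 h'' with rfl | hmem
        · omega
        · exact hB Δ'' (by exact_mod_cast hmem) he''
      have ht1 : runLen α₀ Δ.2 = 1 := by rw [htsucc, ht0]
      have hps : pickShortest (Δ.2 - 1)
          (rest.filter fun Δ'' => decide (Precedes Δ'' Δ)) = none := by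
        apply pickShortest_none
        intro Δ'' h''
        rw [List.mem_filter] at h''
        exact hB Δ'' h''.1
      have hpc : pickChain (n + 1) Δ rest = ([Δ], rest) := by
        rw [pickChain, hps]
      rw [hpc, ht1]
      refine ⟨?_, ?_, rfl⟩
      · show (([Δ] : List Segment) : Multisegment) = _
        rw [hα₀, Multiset.filter_cons]
        simp only [Nat.cast_one]
        rw [if_pos (by omega : Δ.2 - (1:ℤ) < Δ.2)]
        have h2 : (rest : Multisegment).filter (fun Δ' => Δ.2 - ((1:ℕ):ℤ) < Δ'.2) = 0 := by
          rw [Multiset.filter_eq_nil]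
          intro a ha
          have := hmax a (by exact_mod_cast ha)
          push_cast
          omega
        simp only [Nat.cast_one] at h2
        rw [h2, add_zero]
        rfl
      · rw [eq_comm, Multiset.filter_eq_self]
        intro a ha
        have := hmax a (by exact_mod_cast ha)
        push_cast
        omega
/-- The multiset-level description of one step of the MW algorithm. -/
noncomputable def step (α : Multisegment) (e : ℤ) (t : ℕ) : Multisegment :=
  α.filter (fun Δ => Δ.2 ≤ e - (t : ℤ)) +
    ((α.filter fun Δ => e - (t : ℤ) < Δ.2 ∧ Δ.1 < Δ.2).map fun Δ => (Δ.1, Δ.2 - 1))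

lemma coe_filterMap_removeEnd (L : List Segment) :
    ((L.filterMap removeEnd : List Segment) : Multisegment)
      = ((L : Multisegment).filter (fun Δ => Δ.1 < Δ.2)).map (fun Δ => (Δ.1, Δ.2 - 1)) := by
  induction L with
  | nil => rfl
  | cons a L ih =>
    rw [List.filterMap_cons]
    by_cases h : a.1 < a.2
    · have hr : removeEnd a = some (a.1, a.2 - 1) := by
        rw [removeEnd, if_pos (by omega)]
      rw [hr, ← Multiset.cons_coe, ← Multiset.cons_coe, Multiset.filter_cons, if_pos h,
        Multiset.singleton_add, Multiset.map_cons, ih]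
    · have hr : removeEnd a = none := by
        rw [removeEnd, if_neg (by omega)]
      rw [hr, ← Multiset.cons_coe, Multiset.filter_cons, if_neg h, zero_add, ih]

lemma mwIter_spec (l : List Segment) (hg : Good (l : Multisegment)) {e : ℤ}
    (he : ∃ Δ ∈ l, Δ.2 = e) (hub : ∀ Δ ∈ l, Δ.2 ≤ e) :
    ∃ l' : List Segment,
      mwIter l = some ((e - (runLen (l : Multisegment) e : ℤ) + 1, e), l') ∧
      (l' : Multisegment) = step (l : Multisegment) e (runLen (l : Multisegment) e) := by
  classical
  obtain ⟨Δe, hΔel, hee⟩ := he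
  set t := runLen (l : Multisegment) e with htdef
  have hΔem : Δe ∈ (l : Multisegment) := Multiset.mem_coe.2 hΔel
  have ht1 : 1 ≤ t := by
    rw [htdef, ← hee]
    exact runLen_pos hΔem
  have htcard : t ≤ l.length := by
    rw [htdef, ← Multiset.coe_card]
    exact runLen_le_card _ _
  have hmax : (l.map fun Δ => Δ.2).max? = some e := by
    rw [List.max?_eq_some_iff_legacy (anti := ⟨fun _ _ h h' => le_antisymm h h'⟩)
      (fun a : ℤ => le_refl a) (fun a b => max_choice a b) (fun a b c => max_le_iff)]
    exact ⟨List.mem_map.2 ⟨Δe, hΔel, hee⟩, fun b hb => by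
      obtain ⟨Δ, hΔ, rfl⟩ := List.mem_map.1 hb
      exact hub Δ hΔ⟩
  have hps : pickShortest e l = some Δe :=
    pickShortest_unique hΔel hee fun Δ hΔ hΔ2 =>
      hg.end_inj (Multiset.mem_coe.2 hΔ) hΔem (by rw [hΔ2, hee])
  -- set up pickChain hypotheses
  have hcons : Δe ::ₘ ((l.erase Δe : List Segment) : Multisegment) = (l : Multisegment) := by
    rw [coe_erase']
    exact Multiset.cons_erase hΔem
  have hgβ : Good (Δe ::ₘ ((l.erase Δe : List Segment) : Multisegment)) := by
    rw [hcons]; exact hg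
  have hnodup : (l : Multisegment).Nodup := hg.1
  have hβmax : ∀ Δ' ∈ l.erase Δe, Δ'.2 < Δe.2 := by
    intro Δ' h'
    have h'l : Δ' ∈ l := List.mem_of_mem_erase h'
    have hle : Δ'.2 ≤ e := hub Δ' h'l
    rcases eq_or_ne Δ'.2 e with heq | hne
    · exfalso
      have hEq : Δ' = Δe := hg.end_inj (Multiset.mem_coe.2 h'l) hΔem (by rw [heq, hee])
      rw [hEq] at h'
      have hnm : Δe ∉ ((l.erase Δe : List Segment) : Multisegment) := by
        rw [coe_erase']
        exact hnodup.notMem_erase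
      exact hnm (Multiset.mem_coe.2 h')
    · omega
  have hrl : runLen (Δe ::ₘ ((l.erase Δe : List Segment) : Multisegment)) Δe.2 = t := by
    rw [hcons, hee]
  have hfuel : runLen (Δe ::ₘ ((l.erase Δe : List Segment) : Multisegment)) Δe.2
      ≤ l.length + 1 := by
    rw [hrl]; omega
  obtain ⟨hc1, hc2, hc3⟩ := pickChain_spec l.length Δe (l.erase Δe) hgβ hβmax hfuel
  rw [hrl] at hc1 hc2 hc3
  rw [hcons] at hc1
  rw [hee] at hc1 hc2
  refine ⟨(pickChain l.length Δe (l.erase Δe)).2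
      ++ (pickChain l.length Δe (l.erase Δe)).1.filterMap removeEnd, ?_, ?_⟩
  · simp only [mwIter, hmax, hps]
    rw [hc3, hee]
    have harith : e - ((t : ℤ) - 1) = e - (t : ℤ) + 1 := by ring
    rw [harith]
  · rw [← Multiset.coe_add, coe_filterMap_removeEnd, hc1, hc2, step]
    have h1 : Multiset.filter (fun Δ' => Δ'.2 ≤ e - (t : ℤ)) ((l.erase Δe : List Segment) : Multisegment)
        = Multiset.filter (fun Δ' => Δ'.2 ≤ e - (t : ℤ)) (l : Multisegment) := by
      conv_rhs => rw [← hcons]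
      rw [Multiset.filter_cons, if_neg (by omega : ¬(Δe.2 ≤ e - (t : ℤ))), zero_add]
    rw [h1, Multiset.filter_filter]
    have h2 : Multiset.filter (fun a : Segment => a.1 < a.2 ∧ e - (t:ℤ) < a.2) (l : Multisegment)
        = Multiset.filter (fun Δ : Segment => e - (t:ℤ) < Δ.2 ∧ Δ.1 < Δ.2) (l : Multisegment) :=
      Multiset.filter_congr (fun x _ => and_comm)
    rw [h2]
section RunFacts

variable {α : Multisegment} {e : ℤ}

lemma run_exists (j : ℕ) (hj : j < runLen α e) : ∃ Δ ∈ α, Δ.2 = e - j := by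
  have := Nat.find_min (runLen_ex α e) hj
  simpa using this

lemma run_stop : ¬ ∃ Δ ∈ α, Δ.2 = e - (runLen α e : ℤ) := Nat.find_spec (runLen_ex α e)

lemma runLen_ge {k : ℕ} (h : ∀ j : ℕ, j ≤ k → ∃ Δ ∈ α, Δ.2 = e - j) :
    k + 1 ≤ runLen α e := by
  by_contra h'
  push_neg at h'
  exact run_stop (h _ (by omega))

/-- `v`: the number of leading point segments in the run. -/
noncomputable def ptLen (α : Multisegment) (e : ℤ) : ℕ :=
  runLen (α.filter fun Δ => Δ.1 = Δ.2) e

lemma pt_mem (hg : Good α) {j : ℕ} (hj : j < ptLen α e) : (e - j, e - j) ∈ α := by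
  obtain ⟨Δ, hΔ, hΔ2⟩ := run_exists j hj
  rw [Multiset.mem_filter] at hΔ
  have : Δ = (e - (j:ℤ), e - (j:ℤ)) := by
    obtain ⟨Δ1, Δ2⟩ := Δ
    simp_all
  rw [← this]
  exact hΔ.1

lemma ptLen_le (hg : Good α) : ptLen α e ≤ runLen α e := by
  by_contra h
  push_neg at h
  exact run_stop ⟨_, pt_mem hg h, rfl⟩

/-- points in the run propagate upward -/
lemma pt_chain (hg : Good α) :
    ∀ k : ℕ, k < runLen α e → ((e - k, e - k) ∈ α → ∀ j : ℕ, j ≤ k → (e - j, e - j) ∈ α) := by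
  intro k
  induction k with
  | zero =>
    intro _ hmem j hj
    have : j = 0 := by omega
    subst this
    exact hmem
  | succ k ih =>
    intro hk hmem j hj
    -- the segment with end `e - k` is also a point
    obtain ⟨Δ₁, hΔ₁, hΔ₁e⟩ := run_exists (α := α) (e := e) k (by omega)
    have hne : ((e - ((k:ℤ)+1), e - ((k:ℤ)+1)) : Segment) ≠ Δ₁ := by
      intro h
      have h2 : Δ₁.2 = e - ((k:ℤ)+1) := by rw [← h]
      omega
    have hpt : Δ₁ = (e - (k:ℤ), e - (k:ℤ)) := by
      have h3 := hg.2.1 Δ₁ hΔ₁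
      rcases hg.2.2 _ hmem Δ₁ hΔ₁ hne with ⟨h1, h2⟩ | ⟨h1, h2⟩
      · have h1' : e - ((k:ℤ)+1) < Δ₁.1 := h1
        have ha : Δ₁.1 = e - (k:ℤ) := by omega
        exact Prod.ext ha hΔ₁e
      · exfalso
        have h2' : Δ₁.2 < e - ((k:ℤ)+1) := h2
        omega
    rcases Nat.lt_or_ge j (k+1) with h | h
    · exact ih (by omega) (by rw [← hpt]; exact hΔ₁) j (by omega)
    · have : j = k + 1 := by omega
      subst this
      exact hmem

lemma pt_top (hg : Good α) {k : ℕ} (hk : k < runLen α e) (hmem : (e - k, e - k) ∈ α) :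
    k < ptLen α e := by
  have h := pt_chain hg k hk hmem
  have : ∀ j : ℕ, j ≤ k → ∃ Δ ∈ α.filter (fun Δ => Δ.1 = Δ.2), Δ.2 = e - j := by
    intro j hj
    exact ⟨_, Multiset.mem_filter.2 ⟨h j hj, rfl⟩, rfl⟩
  exact Nat.lt_of_lt_of_le (Nat.lt_succ_self k) (runLen_ge this)

lemma run_nonpt (hg : Good α) {j : ℕ} (hv : ptLen α e ≤ j) (hj : j < runLen α e) :
    ∃ Δ ∈ α, Δ.2 = e - j ∧ Δ.1 < Δ.2 := by
  obtain ⟨Δ, hΔ, hΔe⟩ := run_exists j hj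
  have hle := hg.2.1 Δ hΔ
  rcases eq_or_lt_of_le hle with heq | hlt
  · exfalso
    have : Δ = (e - (j:ℤ), e - (j:ℤ)) := by
      obtain ⟨a, b⟩ := Δ
      simp_all
    rw [this] at hΔ
    exact absurd (pt_top hg hj hΔ) (by omega)
  · exact ⟨Δ, hΔ, hΔe, hlt⟩

end RunFacts
section CardStep

variable {α : Multisegment} {e : ℤ}

lemma pts_filter_eq (hg : Good α) (hub : ∀ Δ ∈ α, Δ.2 ≤ e) :
    α.filter (fun Δ => e - (runLen α e : ℤ) < Δ.2 ∧ Δ.1 = Δ.2)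
      = α.filter (fun Δ => e - (ptLen α e : ℤ) < Δ.2) := by
  apply Multiset.filter_congr
  intro Δ hΔ
  have hub' := hub Δ hΔ
  constructor
  · rintro ⟨h1, h2⟩
    set j : ℕ := (e - Δ.2).toNat with hj
    have hje : (j : ℤ) = e - Δ.2 := by omega
    have hjt : j < runLen α e := by omega
    have hΔeq : Δ = (e - (j:ℤ), e - (j:ℤ)) := Prod.ext (by omega) (by omega)
    rw [hΔeq] at hΔ
    have := pt_top hg hjt hΔ
    omega
  · intro h
    set j : ℕ := (e - Δ.2).toNat with hj
    have hvt := ptLen_le (α := α) (e := e) hg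
    have hje : (j : ℤ) = e - Δ.2 := by omega
    have hjv : j < ptLen α e := by omega
    have hmem := pt_mem hg hjv
    have hΔeq : Δ = (e - (j:ℤ), e - (j:ℤ)) := hg.end_inj hΔ hmem (by omega)
    refine ⟨by omega, ?_⟩
    rw [hΔeq]

lemma card_pts : ∀ (v : ℕ) (α : Multisegment) (e : ℤ), Good α →
    (∀ Δ ∈ α, Δ.2 ≤ e) → ptLen α e = v →
    Multiset.card (α.filter fun Δ => e - (v : ℤ) < Δ.2) = v := by
  intro v
  induction v with
  | zero =>
    intro α e hg hub _
    rw [Multiset.card_eq_zero, Multiset.filter_eq_nil]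
    intro Δ hΔ
    have := hub Δ hΔ
    push_cast
    omega
  | succ n ih =>
    intro α e hg hub hv
    have hmem : ((e, e) : Segment) ∈ α := by
      have h0 : 0 < ptLen α e := by omega
      have := pt_mem hg h0
      simpa using this
    set α₀ := α.erase ((e, e) : Segment) with hα₀
    have hαeq : α = ((e, e) : Segment) ::ₘ α₀ := (Multiset.cons_erase hmem).symm
    have hnm : ((e, e) : Segment) ∉ α₀ := hg.1.notMem_erase
    have hub₀ : ∀ Δ ∈ α₀, Δ.2 ≤ e - 1 := by
      intro Δ hΔ
      have hΔα : Δ ∈ α := Multiset.mem_of_le (Multiset.erase_le _ _) hΔ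
      have := hub Δ hΔα
      rcases eq_or_ne Δ.2 e with heq | hne
      · exfalso
        have : Δ = ((e, e) : Segment) := hg.end_inj hΔα hmem heq
        rw [this] at hΔ
        exact hnm hΔ
      · omega
    have hg₀ : Good α₀ := hg.mono (Multiset.erase_le _ _)
    have hpt₀ : ptLen α₀ (e - 1) = n := by
      have h1 : ptLen α e = runLen (α.filter fun Δ => Δ.1 = Δ.2) (e - 1) + 1 :=
        runLen_succ ⟨(e, e), Multiset.mem_filter.2 ⟨hmem, rfl⟩, rfl⟩
      have h2 : runLen (α.filter fun Δ => Δ.1 = Δ.2) (e - 1)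
          = runLen (α₀.filter fun Δ => Δ.1 = Δ.2) (e - 1) := by
        apply runLen_congr
        intro y hy
        constructor
        · rintro ⟨Δ, hΔ, he'⟩
          rw [Multiset.mem_filter] at hΔ
          refine ⟨Δ, Multiset.mem_filter.2 ⟨?_, hΔ.2⟩, he'⟩
          have hne : Δ ≠ ((e, e) : Segment) := by
            intro hc
            rw [hc] at he'
            simp at he'
            omega
          exact (Multiset.mem_erase_of_ne hne).2 hΔ.1
        · rintro ⟨Δ, hΔ, he'⟩
          rw [Multiset.mem_filter] at hΔ
          exact ⟨Δ, Multiset.mem_filter.2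
            ⟨Multiset.mem_of_le (Multiset.erase_le _ _) hΔ.1, hΔ.2⟩, he'⟩
      rw [ptLen] at hv h1 ⊢
      omega
    have harith : e - ((n : ℤ) + 1) = (e - 1) - (n : ℤ) := by ring
    rw [hαeq, Multiset.filter_cons]
    push_cast
    rw [if_pos (by omega : e - ((n:ℤ) + 1) < ((e,e) : Segment).2)]
    rw [Multiset.card_add, Multiset.card_singleton, harith]
    have := ih α₀ (e - 1) hg₀ hub₀ hpt₀
    push_cast at this
    rw [this]
    omega

lemma card_step (hg : Good α) (hub : ∀ Δ ∈ α, Δ.2 ≤ e) :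
    Multiset.card α = Multiset.card (step α e (runLen α e)) + ptLen α e := by
  set t := runLen α e with ht
  rw [step, Multiset.card_add, Multiset.card_map]
  conv_lhs => rw [← Multiset.filter_add_not (fun Δ => Δ.2 ≤ e - (t:ℤ)) α]
  rw [Multiset.card_add]
  have hsplit : α.filter (fun Δ => ¬ Δ.2 ≤ e - (t:ℤ))
      = α.filter (fun Δ => e - (t:ℤ) < Δ.2 ∧ Δ.1 < Δ.2)
        + α.filter (fun Δ => e - (t:ℤ) < Δ.2 ∧ Δ.1 = Δ.2) := by
    conv_lhs => rw [← Multiset.filter_add_not (fun Δ => Δ.1 < Δ.2)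
      (α.filter (fun Δ => ¬ Δ.2 ≤ e - (t:ℤ)))]
    rw [Multiset.filter_filter, Multiset.filter_filter]
    congr 1
    · apply Multiset.filter_congr
      intro Δ hΔ
      constructor
      · rintro ⟨h1, h2⟩; exact ⟨by omega, h1⟩
      · rintro ⟨h1, h2⟩; exact ⟨h2, by omega⟩
    · apply Multiset.filter_congr
      intro Δ hΔ
      have := hg.2.1 Δ hΔ
      constructor
      · rintro ⟨h1, h2⟩; exact ⟨by omega, by omega⟩
      · rintro ⟨h1, h2⟩; exact ⟨by omega, by omega⟩
  rw [hsplit, Multiset.card_add, pts_filter_eq hg hub,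
    card_pts (ptLen α e) α e hg hub rfl]
  omega

end CardStep
section SuppStep

variable {α : Multisegment} {e : ℤ}

lemma mem_step {Δ' : Segment} {t : ℕ} :
    Δ' ∈ step α e t ↔ (Δ' ∈ α ∧ Δ'.2 ≤ e - (t:ℤ)) ∨
      (∃ Δ ∈ α, (e - (t:ℤ) < Δ.2 ∧ Δ.1 < Δ.2) ∧ Δ' = (Δ.1, Δ.2 - 1)) := by
  rw [step, Multiset.mem_add, Multiset.mem_filter, Multiset.mem_map]
  constructor
  · rintro (h | ⟨Δ, hΔ, rfl⟩)
    · exact Or.inl h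
    · rw [Multiset.mem_filter] at hΔ
      exact Or.inr ⟨Δ, hΔ.1, hΔ.2, rfl⟩
  · rintro (h | ⟨Δ, hΔ, hc, rfl⟩)
    · exact Or.inl h
    · exact Or.inr ⟨Δ, Multiset.mem_filter.2 ⟨hΔ, hc⟩, rfl⟩

/-- Nonpoint segments of the run have ends below the point zone. -/
lemma nonpt_le (hg : Good α) (hub : ∀ Δ ∈ α, Δ.2 ≤ e) {Δ : Segment}
    (hΔ : Δ ∈ α) (hnp : Δ.1 < Δ.2) : Δ.2 ≤ e - (ptLen α e : ℤ) := by
  by_contra h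
  push_neg at h
  set j : ℕ := (e - Δ.2).toNat with hj
  have hub' := hub Δ hΔ
  have hje : (j : ℤ) = e - Δ.2 := by omega
  have hjv : j < ptLen α e := by omega
  have hmem := pt_mem hg hjv
  have : Δ = (e - (j:ℤ), e - (j:ℤ)) := hg.end_inj hΔ hmem (by omega)
  rw [this] at hnp
  simp at hnp

/-- Point segments in the run are in the point zone. -/
lemma pt_gt (hg : Good α) (hub : ∀ Δ ∈ α, Δ.2 ≤ e) {Δ : Segment}
    (hΔ : Δ ∈ α) (hp : Δ.1 = Δ.2) (hrun : e - (runLen α e : ℤ) < Δ.2) :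
    e - (ptLen α e : ℤ) < Δ.2 := by
  set j : ℕ := (e - Δ.2).toNat with hj
  have hub' := hub Δ hΔ
  have hje : (j : ℤ) = e - Δ.2 := by omega
  have hjt : j < runLen α e := by omega
  have hΔeq : Δ = (e - (j:ℤ), e - (j:ℤ)) := Prod.ext (by omega) (by omega)
  rw [hΔeq] at hΔ
  have := pt_top hg hjt hΔ
  omega

lemma supp_le (hub : ∀ Δ ∈ α, Δ.2 ≤ e) {x : ℤ} (hx : x ∈ supp α) : x ≤ e := by
  obtain ⟨Δ, hΔ, _, h2⟩ := mem_supp.1 hx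
  exact le_trans h2 (hub Δ hΔ)

/-- the left endpoint of the removed zone -/
noncomputable def remL (α : Multisegment) (e : ℤ) : ℤ :=
  if ptLen α e = runLen α e then e - (runLen α e : ℤ) + 1 else e - (ptLen α e : ℤ)

lemma remL_lb (hg : Good α) : e - (runLen α e : ℤ) + 1 ≤ remL α e := by
  have hvt := ptLen_le (α := α) (e := e) hg
  rw [remL]
  split_ifs with h
  · omega
  · have : ptLen α e < runLen α e := lt_of_le_of_ne hvt h
    omega

lemma remL_ub (hg : Good α) : remL α e ≤ e - (ptLen α e : ℤ) + 1 := by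
  have hvt := ptLen_le (α := α) (e := e) hg
  rw [remL]
  split_ifs with h
  · omega
  · omega

lemma Icc_subset_supp (hg : Good α) (hex : ∃ Δ ∈ α, Δ.2 = e) :
    Finset.Icc (remL α e) e ⊆ supp α := by
  intro x hx
  rw [Finset.mem_Icc] at hx
  have ht1 : 1 ≤ runLen α e := by
    obtain ⟨Δ, hΔ, he'⟩ := hex
    rw [← he']
    exact runLen_pos hΔ
  have hlb := remL_lb (α := α) (e := e) hg
  set j : ℕ := (e - x).toNat with hj
  have hje : (j : ℤ) = e - x := by omega
  have hjt : j < runLen α e := by omega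
  obtain ⟨Δ, hΔ, he'⟩ := run_exists j hjt
  exact mem_supp.2 ⟨Δ, hΔ, by have := hg.2.1 Δ hΔ; omega, by omega⟩

lemma supp_step_eq (hg : Good α) (hub : ∀ Δ ∈ α, Δ.2 ≤ e) (hex : ∃ Δ ∈ α, Δ.2 = e) :
    supp (step α e (runLen α e)) = supp α \ Finset.Icc (remL α e) e := by
  set t := runLen α e with htdef
  set v := ptLen α e with hvdef
  have hvt : v ≤ t := ptLen_le hg
  have ht1 : 1 ≤ t := by
    obtain ⟨Δ, hΔ, he'⟩ := hex
    rw [htdef, ← he']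
    exact runLen_pos hΔ
  have hlb := remL_lb (α := α) (e := e) hg
  have hub' := remL_ub (α := α) (e := e) hg
  ext x
  rw [Finset.mem_sdiff, mem_supp, mem_supp, Finset.mem_Icc]
  constructor
  · rintro ⟨Δ', hΔ', hx1, hx2⟩
    rcases mem_step.1 hΔ' with ⟨hm, hend⟩ | ⟨Δ, hm, ⟨hrun, hnp⟩, rfl⟩
    · -- untouched segment
      have hstop : Δ'.2 ≠ e - (t:ℤ) := by
        intro hc
        exact run_stop ⟨Δ', hm, hc⟩
      exact ⟨⟨Δ', hm, hx1, hx2⟩, by intro ⟨h1, h2⟩; omega⟩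
    · -- trimmed segment
      have hle := nonpt_le hg hub hm hnp
      have hvlt : v < t := by omega
      have hLL : remL α e = e - (v:ℤ) := by
        rw [remL, if_neg (by omega : ¬ ptLen α e = runLen α e)]
      refine ⟨⟨Δ, hm, hx1, by simp at hx2; omega⟩, ?_⟩
      rintro ⟨h1, h2⟩
      simp at hx2
      omega
  · rintro ⟨⟨Δ, hΔ, hx1, hx2⟩, hni⟩
    have hxe : x ≤ e := le_trans hx2 (hub Δ hΔ)
    have hxL : x < remL α e := by
      by_contra hc
      exact hni ⟨by omega, hxe⟩
    by_cases hend : Δ.2 ≤ e - (t:ℤ)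
    · exact ⟨Δ, mem_step.2 (Or.inl ⟨hΔ, hend⟩), hx1, hx2⟩
    · push_neg at hend
      rcases eq_or_lt_of_le (hg.2.1 Δ hΔ) with hp | hnp
      · -- point run segment: impossible since x would be in the removed zone
        exfalso
        have := pt_gt hg hub hΔ hp hend
        omega
      · -- nonpoint run segment
        have hle := nonpt_le hg hub hΔ hnp
        have hvlt : v < t := by omega
        have hLL : remL α e = e - (v:ℤ) := by
          rw [remL, if_neg (by omega : ¬ ptLen α e = runLen α e)]
        rcases lt_or_eq_of_le hx2 with hlt | heq
        · exact ⟨(Δ.1, Δ.2 - 1), mem_step.2 (Or.inr ⟨Δ, hΔ, ⟨hend, hnp⟩, rfl⟩),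
            by simpa using hx1, by simp; omega⟩
        · -- x = Δ.2 : covered by the trimmed segment one level up
          set j : ℕ := (e - Δ.2).toNat with hj
          have hje : (j : ℤ) = e - Δ.2 := by omega
          have hj1 : 1 ≤ j := by omega
          have hjv : v ≤ j - 1 := by omega
          have hjt : (j : ℤ) - 1 < (t:ℤ) := by omega
          obtain ⟨Δ₁, hΔ₁, hΔ₁e, hΔ₁np⟩ := run_nonpt (α := α) (e := e) hg
            (j := j - 1) (by omega) (by omega)
          have hcast : ((j - 1 : ℕ) : ℤ) = (j : ℤ) - 1 := by omega
          refine ⟨(Δ₁.1, Δ₁.2 - 1), mem_step.2 (Or.inr ⟨Δ₁, hΔ₁, ⟨by omega, hΔ₁np⟩, rfl⟩),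
            ?_, ?_⟩
          · simp; omega
          · simp; omega
  end SuppStep
section CompStep

variable {α : Multisegment} {e : ℤ}

lemma ssize_step (hg : Good α) (hub : ∀ Δ ∈ α, Δ.2 ≤ e) (hex : ∃ Δ ∈ α, Δ.2 = e) :
    Ssize α = Ssize (step α e (runLen α e)) + (e + 1 - remL α e).toNat := by
  have hI := Icc_subset_supp (α := α) (e := e) hg hex
  rw [Ssize, Ssize, supp_step_eq hg hub hex]
  have := Finset.card_sdiff_add_card_eq_card hI
  rw [← this, Int.card_Icc]

lemma not_mem_supp_boundary (hg : Good α) (hub : ∀ Δ ∈ α, Δ.2 ≤ e)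
    (hveq : ptLen α e = runLen α e) : e - (runLen α e : ℤ) ∉ supp α := by
  intro hc
  obtain ⟨Δ, hΔ, h1, h2⟩ := mem_supp.1 hc
  rcases eq_or_lt_of_le h2 with heq | hlt
  · exact run_stop ⟨Δ, hΔ, heq.symm⟩
  · rcases eq_or_lt_of_le (hg.2.1 Δ hΔ) with hp | hnp
    · have := pt_gt hg hub hΔ hp hlt
      omega
    · have := nonpt_le hg hub hΔ hnp
      omega

lemma mem_supp_below (hg : Good α) (hub : ∀ Δ ∈ α, Δ.2 ≤ e)
    (hvlt : ptLen α e < runLen α e) : e - (ptLen α e : ℤ) - 1 ∈ supp α := by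
  obtain ⟨Δ, hΔ, he', hnp⟩ := run_nonpt (α := α) (e := e) hg (j := ptLen α e)
    (le_refl _) hvlt
  exact mem_supp.2 ⟨Δ, hΔ, by omega, by omega⟩

lemma comp_step (hg : Good α) (hub : ∀ Δ ∈ α, Δ.2 ≤ e) (hex : ∃ Δ ∈ α, Δ.2 = e) :
    comp α = comp (step α e (runLen α e))
      + (if ptLen α e = runLen α e then 1 else 0) := by
  classical
  have hvt : ptLen α e ≤ runLen α e := ptLen_le hg
  have ht1 : 1 ≤ runLen α e := by
    obtain ⟨Δ, hΔ, he'⟩ := hex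
    rw [← he']
    exact runLen_pos hΔ
  have hlb := remL_lb (α := α) (e := e) hg
  have hub' := remL_ub (α := α) (e := e) hg
  have hI := Icc_subset_supp (α := α) (e := e) hg hex
  rw [comp, comp, supp_step_eq hg hub hex]
  rw [← Finset.card_filter_add_card_filter_not
    (p := fun x => x < remL α e) (s := (supp α).filter fun x => x - 1 ∉ supp α)]
  have hset : ((supp α \ Finset.Icc (remL α e) e).filter
        fun x => x - 1 ∉ (supp α \ Finset.Icc (remL α e) e))
      = ((supp α).filter fun x => x - 1 ∉ supp α).filter (fun x => x < remL α e) := by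
    ext x
    constructor
    · intro hx
      rw [Finset.mem_filter, Finset.mem_sdiff] at hx
      obtain ⟨⟨hxs, hxI⟩, hx2⟩ := hx
      have hxe := supp_le hub hxs
      have hxL : x < remL α e := by
        by_contra hc
        exact hxI (Finset.mem_Icc.2 ⟨by omega, hxe⟩)
      rw [Finset.mem_filter, Finset.mem_filter]
      exact ⟨⟨hxs, fun hc => hx2 (Finset.mem_sdiff.2 ⟨hc, fun hcc => by
        rw [Finset.mem_Icc] at hcc; omega⟩)⟩, hxL⟩
    · intro hx
      rw [Finset.mem_filter, Finset.mem_filter] at hx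
      obtain ⟨⟨hxs, hx1⟩, hxL⟩ := hx
      rw [Finset.mem_filter, Finset.mem_sdiff]
      refine ⟨⟨hxs, fun hc => by rw [Finset.mem_Icc] at hc; omega⟩, fun hc => ?_⟩
      rw [Finset.mem_sdiff] at hc
      exact hx1 hc.1
  rw [hset]
  congr 1
  split_ifs with hveq
  · -- v = t : remL is a removed left endpoint
    have hLval : remL α e = e - (runLen α e : ℤ) + 1 := by
      rw [remL, if_pos hveq]
    have hbd := not_mem_supp_boundary hg hub hveq
    refine Finset.card_eq_one.2 ⟨remL α e, ?_⟩
    ext x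
    rw [Finset.mem_filter, Finset.mem_filter, Finset.mem_singleton]
    constructor
    · rintro ⟨⟨hxs, hx1⟩, hxL⟩
      rw [not_lt] at hxL
      have hxe := supp_le hub hxs
      by_contra hne
      exact hx1 (hI (Finset.mem_Icc.2 ⟨by omega, by omega⟩))
    · rintro rfl
      refine ⟨⟨hI (Finset.mem_Icc.2 ⟨le_refl _, by omega⟩), ?_⟩, by omega⟩
      intro hc
      apply hbd
      have harith : remL α e - 1 = e - (runLen α e : ℤ) := by omega
      rwa [harith] at hc
  · -- v < t : nothing removed
    have hvlt : ptLen α e < runLen α e := lt_of_le_of_ne hvt hveq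
    have hLval : remL α e = e - (ptLen α e : ℤ) := by
      rw [remL, if_neg hveq]
    have hbelow := mem_supp_below hg hub hvlt
    rw [Finset.card_eq_zero, Finset.filter_eq_empty_iff]
    intro x hx
    rw [Finset.mem_filter] at hx
    obtain ⟨hxs, hx1⟩ := hx
    have hxe := supp_le hub hxs
    rw [not_not]
    by_contra hc
    rw [not_lt] at hc
    rcases eq_or_lt_of_le hc with heq | hlt
    · apply hx1
      have harith : x - 1 = e - (ptLen α e : ℤ) - 1 := by omega
      rw [harith]
      exact hbelow
    · exact hx1 (hI (Finset.mem_Icc.2 ⟨by omega, by omega⟩))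

end CompStep
section GoodStep

variable {α : Multisegment} {e : ℤ}

lemma untouched_lt (hΔ : Δ ∈ α) (h : Δ.2 ≤ e - (runLen α e : ℤ)) :
    Δ.2 < e - (runLen α e : ℤ) := by
  rcases eq_or_lt_of_le h with heq | hlt
  · exact absurd ⟨Δ, hΔ, heq⟩ (run_stop (α := α) (e := e))
  · exact hlt

lemma good_step (hg : Good α) : Good (step α e (runLen α e)) := by
  classical
  set t := runLen α e with htdef
  have hinj : Function.Injective (fun Δ : Segment => (Δ.1, Δ.2 - 1)) := by
    intro p q h
    rw [Prod.mk.injEq] at h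
    exact Prod.ext h.1 (by omega)
  refine ⟨?_, ?_, ?_⟩
  · rw [step]
    rw [Multiset.nodup_add]
    refine ⟨hg.1.filter _, (hg.1.filter _).map hinj, ?_⟩
    rw [Multiset.disjoint_left]
    intro a ha hb
    rw [Multiset.mem_filter] at ha
    rw [Multiset.mem_map] at hb
    obtain ⟨Δ, hΔ, hfa⟩ := hb
    rw [Multiset.mem_filter] at hΔ
    have : a.2 = Δ.2 - 1 := by rw [← hfa]
    have h2 := hΔ.2.1
    have := untouched_lt (α := α) (e := e) ha.1 ha.2
    omega
  · intro Δ' hΔ'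
    rcases mem_step.1 hΔ' with ⟨hm, _⟩ | ⟨Δ, hm, ⟨_, hnp⟩, rfl⟩
    · exact hg.2.1 Δ' hm
    · show Δ.1 ≤ Δ.2 - 1
      omega
  · intro Δ₁ h₁ Δ₂ h₂ hne
    rcases mem_step.1 h₁ with ⟨hm₁, he₁⟩ | ⟨Δa, hma, ⟨hra, hnpa⟩, rfl⟩ <;>
      rcases mem_step.1 h₂ with ⟨hm₂, he₂⟩ | ⟨Δb, hmb, ⟨hrb, hnpb⟩, rfl⟩
    · exact hg.2.2 Δ₁ hm₁ Δ₂ hm₂ hne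
    · -- untouched vs trimmed
      have hlt := untouched_lt (α := α) (e := e) hm₁ he₁
      have hneq : Δ₁ ≠ Δb := by
        intro hc
        rw [hc] at hlt
        omega
      rcases hg.2.2 Δ₁ hm₁ Δb hmb hneq with ⟨ha, hb⟩ | ⟨ha, hb⟩
      · exact Or.inl ⟨ha, by show Δ₁.2 < Δb.2 - 1; omega⟩
      · omega
    · have hlt := untouched_lt (α := α) (e := e) hm₂ he₂
      have hneq : Δ₂ ≠ Δa := by
        intro hc
        rw [hc] at hlt
        omega
      rcases hg.2.2 Δ₂ hm₂ Δa hma hneq with ⟨ha, hb⟩ | ⟨ha, hb⟩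
      · exact Or.inr ⟨ha, by show Δ₂.2 < Δa.2 - 1; omega⟩
      · omega
    · have hneq : Δa ≠ Δb := by
        intro hc
        rw [hc] at hne
        exact hne rfl
      rcases hg.2.2 Δa hma Δb hmb hneq with ⟨ha, hb⟩ | ⟨ha, hb⟩
      · exact Or.inl ⟨ha, by show Δa.2 - 1 < Δb.2 - 1; omega⟩
      · exact Or.inr ⟨ha, by show Δb.2 - 1 < Δa.2 - 1; omega⟩

end GoodStep

section TsM

/-- total number of integers (with multiplicity) -/
def tsM (α : Multisegment) : ℕ := (α.map fun Δ => (Δ.2 - Δ.1 + 1).toNat).sum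

lemma totalSize_coe (l : List Segment) : totalSize l = tsM (l : Multisegment) := rfl

lemma tsM_add (α β : Multisegment) : tsM (α + β) = tsM α + tsM β := by
  rw [tsM, tsM, tsM, Multiset.map_add, Multiset.sum_add]

lemma tsM_pos {α : Multisegment} (hg : Good α) (hne : α ≠ 0) : 1 ≤ tsM α := by
  obtain ⟨Δ, hΔ⟩ := Multiset.exists_mem_of_ne_zero hne
  have h1 := hg.2.1 Δ hΔ
  rw [tsM]
  calc 1 ≤ (Δ.2 - Δ.1 + 1).toNat := by omega
  _ ≤ _ := Multiset.single_le_sum (fun x _ => Nat.zero_le x) _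
    (Multiset.mem_map_of_mem (fun Δ : Segment => (Δ.2 - Δ.1 + 1).toNat) hΔ)

lemma tsM_eq_zero {α : Multisegment} (hg : Good α) (h : tsM α = 0) : α = 0 := by
  by_contra hne
  have := tsM_pos hg hne
  omega

lemma tsM_map_trim {s : Multisegment} (h : ∀ Δ ∈ s, Δ.1 < Δ.2) :
    tsM (s.map fun Δ => (Δ.1, Δ.2 - 1)) + Multiset.card s = tsM s := by
  induction s using Multiset.induction_on with
  | empty => rfl
  | cons a s ih =>
    have ha := h a (Multiset.mem_cons_self _ _)
    have ih' := ih fun Δ hΔ => h Δ (Multiset.mem_cons_of_mem hΔ)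
    rw [Multiset.map_cons, tsM, tsM, Multiset.map_cons, Multiset.map_cons,
      Multiset.sum_cons, Multiset.sum_cons, Multiset.card_cons]
    rw [tsM, tsM] at ih'
    have h1 : ((a.1, a.2 - 1) : Segment).2 - ((a.1, a.2 - 1) : Segment).1 + 1
        = a.2 - a.1 := by show a.2 - 1 - a.1 + 1 = a.2 - a.1; ring
    rw [h1]
    omega

lemma run_split {α : Multisegment} {e : ℤ} (hg : Good α) :
    α.filter (fun Δ => ¬ Δ.2 ≤ e - (runLen α e : ℤ))
      = α.filter (fun Δ => e - (runLen α e : ℤ) < Δ.2 ∧ Δ.1 < Δ.2)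
        + α.filter (fun Δ => e - (runLen α e : ℤ) < Δ.2 ∧ Δ.1 = Δ.2) := by
  classical
  set t := runLen α e with htdef
  conv_lhs => rw [← Multiset.filter_add_not (fun Δ => Δ.1 < Δ.2)
    (α.filter (fun Δ => ¬ Δ.2 ≤ e - (t:ℤ)))]
  rw [Multiset.filter_filter, Multiset.filter_filter]
  congr 1
  · apply Multiset.filter_congr
    intro Δ hΔ
    constructor
    · rintro ⟨h1, h2⟩; exact ⟨by omega, h1⟩
    · rintro ⟨h1, h2⟩; exact ⟨h2, by omega⟩
  · apply Multiset.filter_congr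
    intro Δ hΔ
    have := hg.2.1 Δ hΔ
    constructor
    · rintro ⟨h1, h2⟩; exact ⟨by omega, by omega⟩
    · rintro ⟨h1, h2⟩; exact ⟨by omega, by omega⟩

lemma tsM_step_lt {α : Multisegment} {e : ℤ} (hg : Good α)
    (hex : ∃ Δ ∈ α, Δ.2 = e) :
    tsM (step α e (runLen α e)) < tsM α := by
  classical
  set t := runLen α e with htdef
  have ht1 : 1 ≤ t := by
    obtain ⟨Δ, hΔ, he'⟩ := hex
    rw [htdef, ← he']
    exact runLen_pos hΔ
  rw [step, tsM_add]
  conv_rhs => rw [← Multiset.filter_add_not (fun Δ => Δ.2 ≤ e - (t:ℤ)) α, tsM_add]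
  have hmono : tsM ((α.filter fun Δ => e - (t:ℤ) < Δ.2 ∧ Δ.1 < Δ.2).map
      fun Δ => (Δ.1, Δ.2 - 1)) + 1 ≤ tsM (α.filter (fun Δ => ¬ Δ.2 ≤ e - (t:ℤ))) := by
    rw [run_split hg, ← htdef, tsM_add]
    have htrim := tsM_map_trim (s := α.filter fun Δ => e - (t:ℤ) < Δ.2 ∧ Δ.1 < Δ.2)
      (fun Δ hΔ => (Multiset.mem_filter.1 hΔ).2.2)
    -- the top segment of the run is in one of the two parts
    obtain ⟨Δe, hΔe, hee⟩ := hex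
    have herun : e - (t:ℤ) < Δe.2 := by omega
    rcases eq_or_lt_of_le (hg.2.1 Δe hΔe) with hp | hnp
    · -- point : second part has positive size
      have hmem : Δe ∈ α.filter (fun Δ => e - (t:ℤ) < Δ.2 ∧ Δ.1 = Δ.2) :=
        Multiset.mem_filter.2 ⟨hΔe, herun, hp⟩
      have hpos : 1 ≤ tsM (α.filter (fun Δ => e - (t:ℤ) < Δ.2 ∧ Δ.1 = Δ.2)) :=
        tsM_pos (hg.mono (Multiset.filter_le _ _)) (fun hc => by rw [hc] at hmem; simp at hmem)
      omega
    · -- nonpoint : first part has at least one element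
      have hmem : Δe ∈ α.filter (fun Δ => e - (t:ℤ) < Δ.2 ∧ Δ.1 < Δ.2) :=
        Multiset.mem_filter.2 ⟨hΔe, herun, hnp⟩
      have hcard : 1 ≤ Multiset.card (α.filter (fun Δ => e - (t:ℤ) < Δ.2 ∧ Δ.1 < Δ.2)) :=
        Multiset.card_pos.2 (fun hc => by rw [hc] at hmem; simp at hmem)
      omega
  omega

end TsM
section MWAux

lemma exists_maxEnd {α : Multisegment} (hne : α ≠ 0) :
    ∃ e : ℤ, (∃ Δ ∈ α, Δ.2 = e) ∧ ∀ Δ ∈ α, Δ.2 ≤ e := by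
  classical
  have h : (α.toFinset.image Prod.snd).Nonempty := by
    obtain ⟨Δ, hΔ⟩ := Multiset.exists_mem_of_ne_zero hne
    exact ⟨Δ.2, Finset.mem_image.2 ⟨Δ, Multiset.mem_toFinset.2 hΔ, rfl⟩⟩
  refine ⟨(α.toFinset.image Prod.snd).max' h, ?_, ?_⟩
  · obtain ⟨Δ, hΔ, he⟩ := Finset.mem_image.1 ((α.toFinset.image Prod.snd).max'_mem h)
    exact ⟨Δ, Multiset.mem_toFinset.1 hΔ, he⟩
  · intro Δ hΔ
    exact Finset.le_max' _ _ (Finset.mem_image.2 ⟨Δ, Multiset.mem_toFinset.2 hΔ, rfl⟩)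

lemma mwAux_nil (fuel : ℕ) : mwAux fuel [] = [] := by
  cases fuel with
  | zero => rfl
  | succ n => rfl

lemma mwAux_coe : ∀ (N fuel₁ fuel₂ : ℕ) (l₁ l₂ : List Segment),
    Good (l₁ : Multisegment) → (l₁ : Multisegment) = (l₂ : Multisegment) →
    tsM (l₁ : Multisegment) ≤ N →
    tsM (l₁ : Multisegment) ≤ fuel₁ → tsM (l₁ : Multisegment) ≤ fuel₂ →
    ((mwAux fuel₁ l₁ : List Segment) : Multisegment) = ((mwAux fuel₂ l₂ : List Segment) : Multisegment) := by
  intro N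
  induction N with
  | zero =>
    intro fuel₁ fuel₂ l₁ l₂ hg heq hN _ _
    have h0 : (l₁ : Multisegment) = 0 := tsM_eq_zero hg (by omega)
    have h1 : l₁ = [] := (Multiset.coe_eq_zero _).1 h0
    have h2 : l₂ = [] := (Multiset.coe_eq_zero _).1 (by rw [← heq, h0])
    rw [h1, h2, mwAux_nil, mwAux_nil]
  | succ N ih =>
    intro fuel₁ fuel₂ l₁ l₂ hg heq hN hf₁ hf₂
    by_cases hz : (l₁ : Multisegment) = 0
    · have h1 : l₁ = [] := (Multiset.coe_eq_zero _).1 hz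
      have h2 : l₂ = [] := (Multiset.coe_eq_zero _).1 (by rw [← heq, hz])
      rw [h1, h2, mwAux_nil, mwAux_nil]
    · obtain ⟨e, hex, hub⟩ := exists_maxEnd hz
      have hts1 : 1 ≤ tsM (l₁ : Multisegment) := tsM_pos hg hz
      have hg₂ : Good (l₂ : Multisegment) := by rw [← heq]; exact hg
      obtain ⟨l₁', hiter₁, hstep₁⟩ := mwIter_spec l₁ hg
        (by obtain ⟨Δ, h, h2⟩ := hex; exact ⟨Δ, Multiset.mem_coe.1 h, h2⟩) 
        (fun Δ h => hub Δ (Multiset.mem_coe.2 h))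
      obtain ⟨l₂', hiter₂, hstep₂⟩ := mwIter_spec l₂ hg₂
        (by obtain ⟨Δ, h, h2⟩ := hex
            exact ⟨Δ, Multiset.mem_coe.1 (heq ▸ h), h2⟩)
        (fun Δ h => hub Δ (by rw [heq]; exact Multiset.mem_coe.2 h))
      rw [← heq] at hiter₂ hstep₂
      obtain ⟨n₁, hn₁⟩ : ∃ n₁, fuel₁ = n₁ + 1 := ⟨fuel₁ - 1, by omega⟩
      obtain ⟨n₂, hn₂⟩ : ∃ n₂, fuel₂ = n₂ + 1 := ⟨fuel₂ - 1, by omega⟩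
      have hlt := tsM_step_lt hg hex
      rw [hn₁, hn₂]
      rw [mwAux, hiter₁, mwAux, hiter₂]
      rw [← Multiset.cons_coe, ← Multiset.cons_coe]
      congr 1
      exact ih n₁ n₂ l₁' l₂' (by rw [hstep₁]; exact good_step hg)
        (by rw [hstep₁, hstep₂]) (by rw [hstep₁]; omega)
        (by rw [hstep₁]; omega) (by rw [hstep₁]; omega)

lemma dual_toList (α : Multisegment) :
    dual α = ((mwAux (tsM α) α.toList : List Segment) : Multisegment) := by
  rw [dual]
  congr 2
  rw [totalSize_coe, Multiset.coe_toList]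

lemma dual_zero : dual 0 = 0 := by
  rw [dual_toList]
  have : (0 : Multisegment).toList = [] := by
    rw [← Multiset.coe_eq_zero]
    rw [Multiset.coe_toList]
  rw [this, mwAux_nil]
  rfl

lemma dual_cons {α : Multisegment} {e : ℤ} (hg : Good α)
    (hex : ∃ Δ ∈ α, Δ.2 = e) (hub : ∀ Δ ∈ α, Δ.2 ≤ e) :
    dual α = (e - (runLen α e : ℤ) + 1, e) ::ₘ dual (step α e (runLen α e)) := by
  have hz : α ≠ 0 := by
    rintro rfl
    obtain ⟨Δ, hΔ, _⟩ := hex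
    simp at hΔ
  have hts1 : 1 ≤ tsM α := tsM_pos hg hz
  rw [dual_toList]
  have hcoe : (α.toList : Multisegment) = α := Multiset.coe_toList α
  have hg' : Good (α.toList : Multisegment) := by rw [hcoe]; exact hg
  obtain ⟨l', hiter, hstep⟩ := mwIter_spec α.toList hg'
    (by obtain ⟨Δ, h, h2⟩ := hex; exact ⟨Δ, Multiset.mem_toList.2 h, h2⟩)
    (fun Δ h => hub Δ (Multiset.mem_toList.1 h))
  rw [hcoe] at hiter hstep
  obtain ⟨n, hn⟩ : ∃ n, tsM α = n + 1 := ⟨tsM α - 1, by omega⟩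
  rw [hn, mwAux, hiter, ← Multiset.cons_coe]
  congr 1
  rw [dual_toList]
  have hlt := tsM_step_lt hg hex
  exact mwAux_coe (tsM (step α e (runLen α e))) n _ l' (step α e (runLen α e)).toList
    (by rw [hstep]; exact good_step hg)
    (by rw [hstep, Multiset.coe_toList]) (by rw [hstep]) (by rw [hstep]; omega)
    (by rw [hstep])

end MWAux
section Count

lemma supp_zero : supp (0 : Multisegment) = ∅ := by
  rw [supp]
  simp

lemma dual_count : ∀ (N : ℕ) (α : Multisegment), Good α → tsM α ≤ N →
    Multiset.card (dual α) + Multiset.card α = Ssize α + comp α := by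
  intro N
  induction N with
  | zero =>
    intro α hg hN
    have h0 : α = 0 := tsM_eq_zero hg (by omega)
    subst h0
    rw [dual_zero, Ssize, comp, supp_zero]
    simp
  | succ N ih =>
    intro α hg hN
    by_cases hz : α = 0
    · subst hz
      rw [dual_zero, Ssize, comp, supp_zero]
      simp
    · obtain ⟨e, hex, hub⟩ := exists_maxEnd hz
      have hd := dual_cons hg hex hub
      have hlt := tsM_step_lt hg hex
      have hc := ih (step α e (runLen α e)) (good_step hg) (by omega)
      have hS := ssize_step hg hub hex
      have hcomp := comp_step hg hub hex
      have hcard := card_step (α := α) (e := e) hg hub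
      have hvt : ptLen α e ≤ runLen α e := ptLen_le hg
      have ht1 : 1 ≤ runLen α e := by
        obtain ⟨Δ, hΔ, he'⟩ := hex
        rw [← he']
        exact runLen_pos hΔ
      have hlb := remL_lb (α := α) (e := e) hg
      have hub' := remL_ub (α := α) (e := e) hg
      have hκ : (e + 1 - remL α e).toNat + (if ptLen α e = runLen α e then 1 else 0)
          = ptLen α e + 1 := by
        split_ifs with hveq
        · rw [remL, if_pos hveq] at hlb hub' ⊢
          omega
        · rw [remL, if_neg hveq] at hlb hub' ⊢
          omega
      rw [hd, Multiset.card_cons]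
      omega

end Count

section Additivity

/-- `α₁` lies strictly (with a gap) below `α₂`. -/
def MSep (α₁ α₂ : Multisegment) : Prop := ∀ Δ₁ ∈ α₁, ∀ Δ₂ ∈ α₂, Δ₁.2 + 1 < Δ₂.1

lemma dual_add : ∀ (N : ℕ) (α₁ α₂ : Multisegment), Good (α₁ + α₂) → MSep α₁ α₂ →
    tsM α₂ ≤ N → dual (α₁ + α₂) = dual α₁ + dual α₂ := by
  intro N
  induction N with
  | zero =>
    intro α₁ α₂ hg hsep hN
    have h0 : α₂ = 0 := tsM_eq_zero (hg.mono (Multiset.le_add_left _ _)) (by omega)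
    subst h0
    rw [add_zero, dual_zero, add_zero]
  | succ N ih =>
    intro α₁ α₂ hg hsep hN
    by_cases hz : α₂ = 0
    · subst hz
      rw [add_zero, dual_zero, add_zero]
    · obtain ⟨e, hex₂, hub₂⟩ := exists_maxEnd hz
      have hg₂ : Good α₂ := hg.mono (Multiset.le_add_left _ _)
      have hg₁ : Good α₁ := hg.mono (Multiset.le_add_right _ _)
      set t := runLen α₂ e with htdef
      have ht1 : 1 ≤ t := by
        obtain ⟨Δ, hΔ, he'⟩ := hex₂
        rw [htdef, ← he']
        exact runLen_pos hΔ
      -- every end of α₁ is far below the run of α₂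
      obtain ⟨Δb, hΔb, hΔbe⟩ := run_exists (α := α₂) (e := e) (t - 1) (by omega)
      have hα₁lt : ∀ Δ₁ ∈ α₁, Δ₁.2 < e - (t : ℤ) := by
        intro Δ₁ h₁
        have := hsep Δ₁ h₁ Δb hΔb
        have := hg₂.2.1 Δb hΔb
        have hcast : ((t - 1 : ℕ) : ℤ) = (t : ℤ) - 1 := by omega
        omega
      have hex : ∃ Δ ∈ α₁ + α₂, Δ.2 = e := by
        obtain ⟨Δ, hΔ, he'⟩ := hex₂
        exact ⟨Δ, Multiset.mem_add.2 (Or.inr hΔ), he'⟩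
      have hub : ∀ Δ ∈ α₁ + α₂, Δ.2 ≤ e := by
        intro Δ hΔ
        rcases Multiset.mem_add.1 hΔ with h | h
        · have := hα₁lt Δ h
          omega
        · exact hub₂ Δ h
      -- the run of the sum equals the run of α₂
      have hrun_eq : runLen (α₁ + α₂) e = t := by
        apply le_antisymm
        · by_contra hc
          push_neg at hc
          obtain ⟨Δ, hΔ, he'⟩ := run_exists (α := α₁ + α₂) (e := e) t hc
          rcases Multiset.mem_add.1 hΔ with h | h
          · have := hα₁lt Δ h
            omega
          · exact run_stop ⟨Δ, h, he'⟩
        · obtain ⟨k, hk⟩ : ∃ k, t = k + 1 := ⟨t - 1, by omega⟩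
          rw [hk]
          apply runLen_ge
          intro j hj
          obtain ⟨Δ, hΔ, he'⟩ := run_exists (α := α₂) (e := e) j (by omega)
          exact ⟨Δ, Multiset.mem_add.2 (Or.inr hΔ), he'⟩
      -- the step of the sum splits
      have hstep_eq : step (α₁ + α₂) e t = α₁ + step α₂ e t := by
        rw [step, step, Multiset.filter_add, Multiset.filter_add]
        have h1 : α₁.filter (fun Δ => Δ.2 ≤ e - (t:ℤ)) = α₁ :=
          Multiset.filter_eq_self.2 fun Δ hΔ => by have := hα₁lt Δ hΔ; omega
        have h2 : α₁.filter (fun Δ => e - (t:ℤ) < Δ.2 ∧ Δ.1 < Δ.2) = 0 :=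
          Multiset.filter_eq_nil.2 fun Δ hΔ h => by have := hα₁lt Δ hΔ; omega
        rw [h1, h2, Multiset.map_add, Multiset.map_zero, add_assoc, zero_add]
      have hsep' : MSep α₁ (step α₂ e t) := by
        intro Δ₁ h₁ Δ₂ h₂
        rcases mem_step.1 h₂ with ⟨hm, _⟩ | ⟨Δ, hm, _, rfl⟩
        · exact hsep Δ₁ h₁ Δ₂ hm
        · exact hsep Δ₁ h₁ Δ hm
      have hg' : Good (α₁ + step α₂ e t) := by
        rw [← hstep_eq, ← hrun_eq]
        exact good_step hg
      have hlt : tsM (step α₂ e t) < tsM α₂ := tsM_step_lt hg₂ hex₂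
      have hd : dual (α₁ + α₂) = (e - (t : ℤ) + 1, e) ::ₘ dual (α₁ + step α₂ e t) := by
        have := dual_cons hg hex hub
        rw [hrun_eq] at this
        rw [this, hstep_eq]
      have hd₂ : dual α₂ = (e - (t : ℤ) + 1, e) ::ₘ dual (step α₂ e t) :=
        dual_cons hg₂ hex₂ hub₂
      rw [hd, hd₂, ih α₁ (step α₂ e t) hg' hsep' (by omega)]
      rw [← Multiset.singleton_add, ← Multiset.singleton_add, add_left_comm]

end Additivity
section Final

lemma ladder_good {α : Multisegment} (hα : IsMultisegment α) (hlad : IsLadder α) :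
    Good α := by
  obtain ⟨l, hcoe, hchain⟩ := hlad
  have : IsTrans Segment (fun Δ₁ Δ₂ => Δ₁.1 < Δ₂.1 ∧ Δ₁.2 < Δ₂.2) :=
    ⟨fun a b c hab hbc => ⟨lt_trans hab.1 hbc.1, lt_trans hab.2 hbc.2⟩⟩
  have hp : l.Pairwise (fun Δ₁ Δ₂ => Δ₁.1 < Δ₂.1 ∧ Δ₁.2 < Δ₂.2) :=
    List.isChain_iff_pairwise.1 hchain
  have hp' : l.Pairwise (fun Δ₁ Δ₂ => (Δ₁.1 < Δ₂.1 ∧ Δ₁.2 < Δ₂.2)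
      ∨ (Δ₂.1 < Δ₁.1 ∧ Δ₂.2 < Δ₁.2)) := hp.imp Or.inl
  have hsym : Symmetric (fun Δ₁ Δ₂ : Segment => (Δ₁.1 < Δ₂.1 ∧ Δ₁.2 < Δ₂.2)
      ∨ (Δ₂.1 < Δ₁.1 ∧ Δ₂.2 < Δ₁.2)) := fun a b h => h.symm
  refine ⟨?_, ?_, ?_⟩
  · rw [← hcoe, Multiset.coe_nodup]
    exact (hp.imp fun h => by intro hc; rw [hc] at h; omega)
  · intro Δ hΔ
    exact hα Δ hΔ
  · intro Δ₁ h₁ Δ₂ h₂ hne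
    rw [← hcoe, Multiset.mem_coe] at h₁ h₂
    exact (haveI : Std.Symm (fun Δ₁ Δ₂ : Segment => (Δ₁.1 < Δ₂.1 ∧ Δ₁.2 < Δ₂.2)
        ∨ (Δ₂.1 < Δ₁.1 ∧ Δ₂.2 < Δ₁.2)) := ⟨fun a b h => hsym h⟩; hp'.forall) h₁ h₂ hne

lemma card_parts_le (parts : Multiset Multisegment) (h : ∀ γ ∈ parts, γ ≠ 0) :
    Multiset.card parts ≤ Multiset.card parts.sum := by
  induction parts using Multiset.induction_on with
  | empty => simp
  | cons γ parts ih =>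
    rw [Multiset.sum_cons, Multiset.card_cons, Multiset.card_add]
    have h1 : γ ≠ 0 := h γ (Multiset.mem_cons_self _ _)
    have h2 : 1 ≤ Multiset.card γ := Multiset.card_pos.2 h1
    have h3 := ih fun γ' hγ' => h γ' (Multiset.mem_cons_of_mem hγ')
    omega

lemma comp_pos {α : Multisegment} (hg : Good α) (hz : α ≠ 0) : 1 ≤ comp α := by
  classical
  obtain ⟨Δ, hΔ⟩ := Multiset.exists_mem_of_ne_zero hz
  have hsupp : Δ.1 ∈ supp α := mem_supp.2 ⟨Δ, hΔ, le_refl _, hg.2.1 Δ hΔ⟩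
  have hne : (supp α).Nonempty := ⟨Δ.1, hsupp⟩
  have hmin : (supp α).min' hne ∈ (supp α).filter fun x => x - 1 ∉ supp α := by
    rw [Finset.mem_filter]
    refine ⟨(supp α).min'_mem hne, fun hc => ?_⟩
    have := (supp α).min'_le _ hc
    omega
  rw [comp]
  exact Finset.card_pos.2 ⟨_, hmin⟩

end Final
/-- for an irreducible ladder multisegment,
`n_{α̃} + n_α = S_α + c_α` with `c_α = 1`. -/
theorem stmt12 (α : Multisegment) (hα : IsMultisegment α) (hlad : IsLadder α)
    (hirr : Cmax α = 1) :
    comp α = 1 ∧ nSeg (dual α) + nSeg α = Ssize α + comp α := by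
  classical
  have hg : Good α := ladder_good hα hlad
  have hformula : nSeg (dual α) + nSeg α = Ssize α + comp α :=
    dual_count (tsM α) α hg (le_refl _)
  refine ⟨?_, hformula⟩
  by_cases hz : α = 0
  · -- the empty multisegment is not irreducible : Cmax 0 = 0 ≠ 1
    exfalso
    subst hz
    have hset : {n | ∃ parts : Multiset Multisegment, Multiset.card parts = n ∧
        (∀ γ ∈ parts, γ ≠ 0) ∧ parts.sum = (0 : Multisegment) ∧
        (parts.map dual).sum = dual 0} = {0} := by
      apply Set.eq_singleton_iff_unique_mem.2
      constructor
      · exact ⟨0, by simp, by simp, by simp, by simp [dual_zero]⟩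
      · rintro n ⟨parts, hcard, hnz, hsum, _⟩
        have hparts : parts = 0 := by
          by_contra hc
          obtain ⟨γ, hγ⟩ := Multiset.exists_mem_of_ne_zero hc
          have hle : γ ≤ parts.sum :=
            Multiset.single_le_sum (fun x _ => Multiset.zero_le x) _ hγ
          rw [hsum] at hle
          exact hnz γ hγ (Multiset.le_zero.1 hle)
        rw [← hcard, hparts]
        rfl
    rw [Cmax, hset, csSup_singleton] at hirr
    exact absurd hirr (by omega)
  · -- α is nonzero : show comp α = 1
    have h1 := comp_pos hg hz
    by_contra hcomp
    have h2 : 2 ≤ comp α := by omega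
    rw [comp] at h2
    obtain ⟨a, ha, b, hb, hab⟩ := Finset.one_lt_card.1
      (show 1 < ((supp α).filter fun x => x - 1 ∉ supp α).card by omega)
    rw [Finset.mem_filter] at ha hb
    -- m : the larger left endpoint, y : a smaller support element
    set m := max a b with hm
    set y := min a b with hy
    have hym : y < m := by
      rw [hm, hy]
      rcases lt_or_gt_of_ne hab with h | h
      · rw [max_eq_right (le_of_lt h), min_eq_left (le_of_lt h)]; exact h
      · rw [max_eq_left (le_of_lt h), min_eq_right (le_of_lt h)]; exact h
    have hmsupp : m ∈ supp α := by
      rw [hm]; rcases max_choice a b with h | h <;> rw [h]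
      · exact ha.1
      · exact hb.1
    have hm1 : m - 1 ∉ supp α := by
      rw [hm]; rcases max_choice a b with h | h <;> rw [h]
      · exact ha.2
      · exact hb.2
    have hysupp : y ∈ supp α := by
      rw [hy]; rcases min_choice a b with h | h <;> rw [h]
      · exact ha.1
      · exact hb.1
    -- no segment crosses the gap at m - 1
    have hcross : ∀ Δ ∈ α, Δ.2 ≤ m - 2 ∨ m ≤ Δ.1 := by
      intro Δ hΔ
      by_contra hc
      push_neg at hc
      exact hm1 (mem_supp.2 ⟨Δ, hΔ, by omega, by omega⟩)
    set α₁ := α.filter (fun Δ => Δ.2 < m) with hα₁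
    set α₂ := α.filter (fun Δ => ¬ Δ.2 < m) with hα₂
    have hsplit : α₁ + α₂ = α := Multiset.filter_add_not _ _
    have hgood : Good (α₁ + α₂) := by rw [hsplit]; exact hg
    have hsep : MSep α₁ α₂ := by
      intro Δ₁ h₁ Δ₂ h₂
      rw [hα₁, Multiset.mem_filter] at h₁
      rw [hα₂, Multiset.mem_filter] at h₂
      have h₁2 := h₁.2
      have h₂2 := h₂.2
      have hΔ₁ := hg.2.1 Δ₁ h₁.1
      rcases hcross Δ₂ h₂.1 with h' | h'
      · omega
      · rcases hcross Δ₁ h₁.1 with h | h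
        · omega
        · omega
    have hone : α₁ ≠ 0 := by
      obtain ⟨Δ, hΔ, hy1, hy2⟩ := mem_supp.1 hysupp
      intro hc
      rcases hcross Δ hΔ with h | h
      · have : Δ ∈ α₁ := by rw [hα₁, Multiset.mem_filter]; exact ⟨hΔ, by omega⟩
        rw [hc] at this
        simp at this
      · omega
    have htwo : α₂ ≠ 0 := by
      obtain ⟨Δ, hΔ, hm2, hm3⟩ := mem_supp.1 hmsupp
      intro hc
      have : Δ ∈ α₂ := by rw [hα₂, Multiset.mem_filter]; exact ⟨hΔ, by omega⟩
      rw [hc] at this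
      simp at this
    have hdual : dual α = dual α₁ + dual α₂ := by
      conv_lhs => rw [← hsplit]
      exact dual_add (tsM α₂) α₁ α₂ hgood hsep (le_refl _)
    -- 2 is in the decomposition set
    have hmem2 : (2 : ℕ) ∈ {n | ∃ parts : Multiset Multisegment,
        Multiset.card parts = n ∧ (∀ γ ∈ parts, γ ≠ 0) ∧ parts.sum = α ∧
        (parts.map dual).sum = dual α} := by
      refine ⟨α₁ ::ₘ {α₂}, by simp, ?_, ?_, ?_⟩
      · intro γ hγ
        rcases Multiset.mem_cons.1 hγ with rfl | hγ
        · exact hone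
        · rw [Multiset.mem_singleton.1 hγ]
          exact htwo
      · rw [Multiset.sum_cons, Multiset.sum_singleton]
        exact hsplit
      · rw [Multiset.map_cons, Multiset.map_singleton, Multiset.sum_cons,
          Multiset.sum_singleton, hdual]
    have hbdd : BddAbove {n | ∃ parts : Multiset Multisegment,
        Multiset.card parts = n ∧ (∀ γ ∈ parts, γ ≠ 0) ∧ parts.sum = α ∧
        (parts.map dual).sum = dual α} := by
      refine ⟨Multiset.card α, ?_⟩
      rintro n ⟨parts, hcard, hnz, hsum, _⟩
      rw [← hcard, ← hsum]
      exact card_parts_le parts hnz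
    have : (2 : ℕ) ≤ Cmax α := le_csSup hbdd hmem2
    rw [hirr] at this
    omega
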